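/- Let X and Y be metric spaces, let D ⊆ X be open, and let f : D → Y be continuous and discrete (i.e., for every y ∈ Y the fiber f⁻¹(y) is a discrete subset of D). Let α : [a,c) → D be a continuous curve such that the closure of its image α([a,c)) is compact and contained in D, and suppose f(α(t)) converges to some point y₀ ∈ Y as t → c⁻. Then α(t) converges as t → c⁻ to some point x* ∈ D, and f(x*) = y₀; that is, α extends to a continuous curve ᾱ : [a,c] → D with f(ᾱ(c)) = y₀. -/

import Mathlib

open Filter Set Metric

/-- Let `X`, `Y` be metric spaces, `D ⊆ X` open, and `f : D → Y`
continuous and discrete (every fiber has no accumulation points in `D`).  Let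
`α : [a,c) → D` be a continuous curve whose image has compact closure contained in `D`,
and suppose `f(α(t)) → y₀ ∈ Y` as `t → c⁻`.  Then `α(t)` converges as `t → c⁻` to some
`x* ∈ D` with `f(x*) = y₀`; that is, `α` extends to a continuous curve on `[a,c]` with
`f(ᾱ(c)) = y₀`. -/
theorem statement16 {X Y : Type*} [MetricSpace X] [MetricSpace Y]
    (D : Set X) (hD : IsOpen D) (f : X → Y) (hf : ContinuousOn f D)
    (hdisc : ∀ y : Y, ∀ x ∈ D, ¬ AccPt x (Filter.principal (D ∩ f ⁻¹' {y})))
    (a c : ℝ) (hac : a < c) (α : ℝ → X)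
    (hα : ContinuousOn α (Set.Ico a c))
    (hαD : ∀ t ∈ Set.Ico a c, α t ∈ D)
    (hclcomp : IsCompact (closure (α '' Set.Ico a c)))
    (hclD : closure (α '' Set.Ico a c) ⊆ D)
    (y₀ : Y)
    (hlim : Filter.Tendsto (fun t => f (α t)) (nhdsWithin c (Set.Ico a c)) (nhds y₀)) :
    ∃ xstar ∈ D,
      Filter.Tendsto α (nhdsWithin c (Set.Ico a c)) (nhds xstar) ∧ f xstar = y₀ := by
  set L := nhdsWithin c (Set.Ico a c) with hLdef
  have hL2 : L = nhdsWithin c (Set.Iio c) := nhdsWithin_Ico_eq_nhdsLT hac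
  haveI hne : L.NeBot := by
    rw [hLdef]
    exact mem_closure_iff_nhdsWithin_neBot.mp
      (by rw [closure_Ico hac.ne]; exact ⟨hac.le, le_refl c⟩)
  set K := closure (α '' Set.Ico a c) with hKdef
  have hmapD : Filter.map α L ≤ 𝓟 D := by
    rw [Filter.le_principal_iff, Filter.mem_map]
    filter_upwards [self_mem_nhdsWithin] with t ht using hαD t ht
  have hmapK : Filter.map α L ≤ 𝓟 K := by
    rw [Filter.le_principal_iff, Filter.mem_map]
    filter_upwards [self_mem_nhdsWithin] with t ht
    exact subset_closure (mem_image_of_mem α ht)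
  have key : ∀ z ∈ D, ClusterPt z (Filter.map α L) → f z = y₀ := by
    intro z hzD hz
    haveI : (nhds z ⊓ Filter.map α L).NeBot := hz
    have h1 : Filter.Tendsto f (nhds z ⊓ Filter.map α L) (nhds (f z)) := by
      refine (hf z hzD).mono_left ?_
      rw [nhdsWithin]
      exact inf_le_inf_left _ hmapD
    have h2 : Filter.Tendsto f (nhds z ⊓ Filter.map α L) (nhds y₀) := by
      have : Filter.Tendsto f (Filter.map α L) (nhds y₀) := by
        rwa [Filter.tendsto_map'_iff]
      exact this.mono_left inf_le_right
    exact tendsto_nhds_unique h1 h2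
  obtain ⟨xstar, hxK, hxcl⟩ := hclcomp.exists_clusterPt hmapK
  have hxD : xstar ∈ D := hclD hxK
  refine ⟨xstar, hxD, ?_, key xstar hxD hxcl⟩
  by_contra hnot
  rw [Metric.tendsto_nhds] at hnot
  push_neg at hnot
  obtain ⟨ε, hε, hfreq⟩ := hnot
  replace hfreq : ∃ᶠ t in L, ¬ dist (α t) xstar < ε := hfreq.mono fun t ht => not_lt.mpr ht
  -- discreteness radius around xstar
  obtain ⟨ε₀, hε₀, hloc⟩ : ∃ ε₀ > 0, ∀ z, dist z xstar < ε₀ → z ∈ D → f z = y₀ → z = xstar := by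
    have h := hdisc y₀ xstar hxD
    rw [accPt_iff_nhds] at h
    push_neg at h
    obtain ⟨U, hU, hU2⟩ := h
    obtain ⟨ε₀, hε₀, hball⟩ := Metric.mem_nhds_iff.mp hU
    exact ⟨ε₀, hε₀, fun z hz hzD hzf => hU2 z ⟨hball hz, hzD, hzf⟩⟩
  set ε₁ := min ε ε₀ with hε₁def
  have hε₁ : 0 < ε₁ := lt_min hε hε₀
  set r := ε₁ / 2 with hrdef
  have hr : 0 < r := half_pos hε₁
  have freq_near : ∃ᶠ t in L, dist (α t) xstar < r :=
    mapClusterPt_iff_frequently.mp hxcl (Metric.ball xstar r) (Metric.ball_mem_nhds _ hr)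
  have freq_far : ∃ᶠ t in L, ε₁ ≤ dist (α t) xstar :=
    hfreq.mono fun t ht => le_trans (min_le_left ε ε₀) (not_lt.mp ht)
  have freq_mid : ∃ᶠ t in L, dist (α t) xstar = r := by
    rw [hL2, (nhdsLT_basis c).frequently_iff]
    intro b hb
    have hev1 : ∀ᶠ t in L, t ∈ Set.Ico a c ∧ b < t := by
      filter_upwards [self_mem_nhdsWithin,
        nhdsWithin_le_nhds (Ioi_mem_nhds hb)] with t ht1 ht2 using ⟨ht1, ht2⟩
    obtain ⟨t₁, ht₁r, ht₁Ico, ht₁b⟩ := (freq_near.and_eventually hev1).exists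
    have hev2 : ∀ᶠ t in L, t ∈ Set.Ico a c ∧ t₁ < t := by
      filter_upwards [self_mem_nhdsWithin,
        nhdsWithin_le_nhds (Ioi_mem_nhds ht₁Ico.2)] with t ht1 ht2 using ⟨ht1, ht2⟩
    obtain ⟨t₂, ht₂far, ht₂Ico, ht₂gt⟩ := (freq_far.and_eventually hev2).exists
    have hsub : Set.Icc t₁ t₂ ⊆ Set.Ico a c := fun u hu =>
      ⟨le_trans ht₁Ico.1 hu.1, lt_of_le_of_lt hu.2 ht₂Ico.2⟩
    have hcont : ContinuousOn (fun t => dist (α t) xstar) (Set.Icc t₁ t₂) :=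
      Continuous.comp_continuousOn (continuous_id.dist continuous_const) (hα.mono hsub)
    have hrmem : r ∈ Set.Icc (dist (α t₁) xstar) (dist (α t₂) xstar) :=
      ⟨ht₁r.le, le_trans (by rw [hrdef]; linarith) ht₂far⟩
    obtain ⟨u, huIcc, hur⟩ := intermediate_value_Icc ht₂gt.le hcont hrmem
    exact ⟨u, ⟨lt_of_lt_of_le ht₁b huIcc.1, lt_of_le_of_lt huIcc.2 ht₂Ico.2⟩, hur⟩
  haveI hG : (L ⊓ 𝓟 {t | dist (α t) xstar = r}).NeBot :=
    Filter.frequently_iff_neBot.mp freq_mid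
  set G := L ⊓ 𝓟 {t | dist (α t) xstar = r} with hGdef
  have hGL : Filter.map α G ≤ Filter.map α L := Filter.map_mono inf_le_left
  obtain ⟨z, hzK, hzcl⟩ := hclcomp.exists_clusterPt (le_trans hGL hmapK)
  have hzD : z ∈ D := hclD hzK
  have hfz : f z = y₀ := key z hzD (hzcl.mono hGL)
  have hzr : dist z xstar = r := by
    have hclosed : IsClosed {w : X | dist w xstar = r} :=
      isClosed_eq (continuous_dist.comp (continuous_id.prodMk continuous_const)) continuous_const
    have hle : Filter.map α G ≤ 𝓟 {w : X | dist w xstar = r} := by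
      rw [Filter.le_principal_iff, Filter.mem_map]
      filter_upwards [Filter.mem_inf_of_right (Filter.mem_principal_self _)] with t ht using ht
    exact isClosed_iff_clusterPt.mp hclosed z (hzcl.mono hle)
  have hzx : z = xstar := by
    refine hloc z ?_ hzD hfz
    rw [hzr, hrdef]
    calc ε₁ / 2 < ε₁ := by linarith
    _ ≤ ε₀ := min_le_right ε ε₀
  rw [hzx, dist_self] at hzr
  exact absurd hzr.symm (ne_of_gt hr)
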